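/- For every finite simple graph G, the fifth power sum of the complex roots of the Laplacian matching polynomial satisfies p_5(G) = A_5(G) + 5·A_4(G) + 5·A_3(G) − 5·A_2(G) + 5·C(G) + 10·B(G). -/

import Mathlib

open Polynomial Finset

namespace LMRIV

open scoped Classical

variable {V : Type*}

/-- The degree of a vertex. -/
noncomputable def deg [Fintype V] (G : SimpleGraph V) (v : V) : ℕ :=
  (univ.filter fun w => G.Adj v w).card

/-- The finset of edges of `G`. -/
noncomputable def edges [Fintype V] (G : SimpleGraph V) : Finset (Sym2 V) :=
  univ.filter fun e => e ∈ G.edgeSet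

/-- A matching: a set of pairwise disjoint edges. -/
def IsMatching (G : SimpleGraph V) (M : Finset (Sym2 V)) : Prop :=
  (↑M : Set (Sym2 V)) ⊆ G.edgeSet ∧
    ∀ e ∈ M, ∀ f ∈ M, e ≠ f → ∀ x : V, x ∈ e → x ∉ f

/-- The finset of all matchings of `G` (including the empty matching). -/
noncomputable def matchings [Fintype V] (G : SimpleGraph V) : Finset (Finset (Sym2 V)) :=
  univ.filter fun M => IsMatching G M

/-- The set of vertices covered by a matching. -/
noncomputable def covered [Fintype V] (M : Finset (Sym2 V)) : Finset V :=
  univ.filter fun x => ∃ e ∈ M, x ∈ e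

/-- The Laplacian matching polynomial of `G`, with coefficients in `R`. -/
noncomputable def LM (R : Type*) [CommRing R] [Fintype V] (G : SimpleGraph V) :
    Polynomial R :=
  ∑ M ∈ matchings G, (-1 : Polynomial R) ^ M.card *
    ∏ v ∈ univ \ covered M, (X - C (deg G v : R))

/-- `p_r(G)`: the sum of the `r`-th powers of the complex roots of `LM_G`. -/
noncomputable def psum [Fintype V] (G : SimpleGraph V) (r : ℕ) : ℂ :=
  (((LM ℂ G).roots).map (· ^ r)).sum

/-- `A_r(G) = Σ_v d_G(v)^r`. -/
noncomputable def A [Fintype V] (G : SimpleGraph V) (r : ℕ) : ℕ :=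
  ∑ v : V, (deg G v) ^ r

/-- `B(G) = Σ_{xy ∈ E(G)} d_G(x) d_G(y)`. -/
noncomputable def B [Fintype V] (G : SimpleGraph V) : ℕ :=
  ∑ e ∈ edges G, Sym2.lift ⟨fun x y => deg G x * deg G y, fun x y => mul_comm _ _⟩ e

/-- `C(G) = Σ_{xy ∈ E(G)} (d_G(x)^2 d_G(y) + d_G(x) d_G(y)^2)`. -/
noncomputable def Csum [Fintype V] (G : SimpleGraph V) : ℕ :=
  ∑ e ∈ edges G,
    Sym2.lift ⟨fun x y => deg G x ^ 2 * deg G y + deg G x * deg G y ^ 2,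
      fun x y => by ring⟩ e

/-- The graph obtained from `G` by adding the edge `uv`. -/
def addEdge (G : SimpleGraph V) (u v : V) : SimpleGraph V :=
  G ⊔ SimpleGraph.fromEdgeSet {s(u, v)}

/-- `S_w = Σ_{x ∈ N_G(w)} d_G(x)`. -/
noncomputable def Ssum [Fintype V] (G : SimpleGraph V) (w : V) : ℕ :=
  ∑ x ∈ univ.filter fun x => G.Adj w x, deg G x

/-- `T_w = Σ_{x ∈ N_G(w)} d_G(x)^2`. -/
noncomputable def Tsum [Fintype V] (G : SimpleGraph V) (w : V) : ℕ :=
  ∑ x ∈ univ.filter fun x => G.Adj w x, (deg G x) ^ 2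

/-- The `r`-th elementary symmetric polynomial of the degree sequence of `G`. -/
noncomputable def esymmDeg [Fintype V] (G : SimpleGraph V) (r : ℕ) : ℕ :=
  ∑ s ∈ univ.powersetCard r, ∏ v ∈ s, deg G v

/-- `φ_2(G)`: the number of 2-matchings of `G`. -/
noncomputable def phi2 [Fintype V] (G : SimpleGraph V) : ℕ :=
  ((matchings G).filter fun M => M.card = 2).card

/-! ### Auxiliary development -/

section NewtonAux
variable {R : Type*} [CommRing R]

lemma esymm_cons (a : R) (s : Multiset R) (k : ℕ) :
    (a ::ₘ s).esymm (k+1) = a * s.esymm k + s.esymm (k+1) := by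
  simp only [Multiset.esymm, Multiset.powersetCard_cons, Multiset.map_add, Multiset.sum_add,
    Multiset.map_map, Function.comp_def, Multiset.prod_cons]
  rw [add_comm, Multiset.sum_map_mul_left]

lemma esymm_zero' (s : Multiset R) : s.esymm 0 = 1 := by
  simp [Multiset.esymm]

lemma esymm_one' (s : Multiset R) : s.esymm 1 = s.sum := by
  simp [Multiset.esymm, Multiset.powersetCard_one, Multiset.map_map, Function.comp_def]

lemma esymm_card_lt {s : Multiset R} {k : ℕ} (h : Multiset.card s < k) : s.esymm k = 0 := by
  rw [Multiset.esymm, Multiset.powersetCard_eq_empty _ h]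
  simp

lemma newton5 (s : Multiset R) :
    (s.map (· ^ 5)).sum =
      s.esymm 1 ^ 5 - 5 * s.esymm 1 ^ 3 * s.esymm 2 + 5 * s.esymm 1 * s.esymm 2 ^ 2
        + 5 * s.esymm 1 ^ 2 * s.esymm 3 - 5 * s.esymm 2 * s.esymm 3
        - 5 * s.esymm 1 * s.esymm 4 + 5 * s.esymm 5 := by
  induction s using Multiset.induction with
  | empty =>
      have h : ∀ k, 0 < k → Multiset.esymm (0 : Multiset R) k = 0 :=
        fun k hk => esymm_card_lt (by simpa using hk)
      simp [h 1 (by norm_num), h 2 (by norm_num), h 3 (by norm_num), h 4 (by norm_num),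
        h 5 (by norm_num)]
  | cons a s ih =>
      have h1 : (a ::ₘ s).esymm 1 = a * s.esymm 0 + s.esymm 1 := esymm_cons a s 0
      have h2 : (a ::ₘ s).esymm 2 = a * s.esymm 1 + s.esymm 2 := esymm_cons a s 1
      have h3 : (a ::ₘ s).esymm 3 = a * s.esymm 2 + s.esymm 3 := esymm_cons a s 2
      have h4 : (a ::ₘ s).esymm 4 = a * s.esymm 3 + s.esymm 4 := esymm_cons a s 3
      have h5 : (a ::ₘ s).esymm 5 = a * s.esymm 4 + s.esymm 5 := esymm_cons a s 4
      rw [Multiset.map_cons, Multiset.sum_cons, ih, h1, h2, h3, h4, h5, esymm_zero']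
      ring

end NewtonAux

section GraphAux
variable [Fintype V] (G : SimpleGraph V)

/-- complex degree -/
noncomputable def degC (v : V) : ℂ := (deg G v : ℂ)

/-- multiset of complex degrees -/
noncomputable def DD : Multiset ℂ := Finset.univ.val.map (degC G)

/-- product of linear factors over a vertex subset -/
noncomputable def PP (s : Finset V) : Polynomial ℂ := ∏ v ∈ s, (X - C (degC G v))

/-- degree multiset of vertices not covered by `M` -/
noncomputable def restD (M : Finset (Sym2 V)) : Multiset ℂ :=
  ((univ \ covered M).val.map (degC G))

variable {G}

lemma mem_matchings {M : Finset (Sym2 V)} : M ∈ matchings G ↔ IsMatching G M := by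
  simp [matchings]

lemma empty_mem_matchings : ∅ ∈ matchings G := by
  simp [mem_matchings, IsMatching]

lemma covered_empty : covered (∅ : Finset (Sym2 V)) = ∅ := by
  ext x; simp [covered]

lemma mem_covered {M : Finset (Sym2 V)} {x : V} : x ∈ covered M ↔ ∃ e ∈ M, x ∈ e := by
  simp [covered]

lemma edge_mem_edgeSet {M : Finset (Sym2 V)} (hM : M ∈ matchings G) {e : Sym2 V}
    (he : e ∈ M) : e ∈ G.edgeSet := (mem_matchings.1 hM).1 he

lemma mem_edges {e : Sym2 V} : e ∈ edges G ↔ e ∈ G.edgeSet := by simp [edges]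

lemma filter_mem_eq_pair {x y : V} (hxy : x ≠ y) :
    (univ.filter (· ∈ s(x,y)) : Finset V) = {x, y} := by
  ext z; simp [Sym2.mem_iff]

lemma card_filter_mem {e : Sym2 V} (he : e ∈ G.edgeSet) :
    (univ.filter (· ∈ e) : Finset V).card = 2 := by
  induction e using Sym2.ind with
  | _ x y =>
      rw [SimpleGraph.mem_edgeSet] at he
      rw [filter_mem_eq_pair (G.ne_of_adj he)]
      exact Finset.card_pair (G.ne_of_adj he)

lemma covered_eq_biUnion (M : Finset (Sym2 V)) :
    covered M = M.biUnion (fun e => univ.filter (· ∈ e)) := by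
  ext z; simp [covered]

lemma card_covered {M : Finset (Sym2 V)} (hM : M ∈ matchings G) :
    (covered M).card = 2 * M.card := by
  rw [covered_eq_biUnion, Finset.card_biUnion]
  · rw [Finset.sum_congr rfl (fun e he => card_filter_mem (edge_mem_edgeSet hM he)),
      Finset.sum_const, smul_eq_mul, mul_comm]
  · intro e he f hf hef
    rw [Function.onFun, Finset.disjoint_left]
    intro z hz hz'
    exact (mem_matchings.1 hM).2 e he f hf hef z (Finset.mem_filter.1 hz).2
      (Finset.mem_filter.1 hz').2

lemma two_card_le {M : Finset (Sym2 V)} (hM : M ∈ matchings G) :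
    2 * M.card ≤ Fintype.card V := by
  rw [← card_covered hM]
  simpa using Finset.card_le_card (Finset.subset_univ (covered M))

lemma card_sdiff_covered {M : Finset (Sym2 V)} (hM : M ∈ matchings G) :
    (univ \ covered M).card = Fintype.card V - 2 * M.card := by
  have h := card_covered hM
  rw [Finset.card_sdiff_of_subset (Finset.subset_univ _), Finset.card_univ, h]

lemma card_restD {M : Finset (Sym2 V)} (hM : M ∈ matchings G) :
    Multiset.card (restD G M) = Fintype.card V - 2 * M.card := by
  simp only [restD, Multiset.card_map]
  exact card_sdiff_covered hM

end GraphAux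

section PolyAux
variable [Fintype V] {G : SimpleGraph V}

lemma PP_monic (s : Finset V) : (PP G s).Monic :=
  monic_prod_of_monic _ _ fun _ _ => monic_X_sub_C _

lemma PP_natDegree (s : Finset V) : (PP G s).natDegree = s.card := by
  rw [PP, natDegree_prod_of_monic _ _ fun _ _ => monic_X_sub_C _]
  simp

lemma PP_degree (s : Finset V) : (PP G s).degree = s.card := by
  rw [Polynomial.degree_eq_natDegree (PP_monic s).ne_zero, PP_natDegree]

lemma PP_eq_multiset_prod (s : Finset V) :
    PP G s = ((s.val.map (degC G)).map (fun t => X - C t)).prod := by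
  rw [PP, Finset.prod, Multiset.map_map]
  rfl

lemma PP_coeff (s : Finset V) {j : ℕ} (h : j ≤ s.card) :
    (PP G s).coeff j = (-1) ^ (s.card - j) * ((s.val.map (degC G)).esymm (s.card - j)) := by
  rw [PP_eq_multiset_prod]
  have hc : Multiset.card (s.val.map (degC G)) = s.card := by simp
  have := Multiset.prod_X_sub_C_coeff (s.val.map (degC G)) (k := j) (by rw [hc]; exact h)
  rw [hc] at this
  exact this

lemma PP_coeff_zero (s : Finset V) {j : ℕ} (h : s.card < j) : (PP G s).coeff j = 0 :=
  coeff_eq_zero_of_natDegree_lt (by rw [PP_natDegree]; exact h)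

lemma LM_eq_sum : LM ℂ G = ∑ M ∈ matchings G, (-1) ^ M.card * PP G (univ \ covered M) := rfl

lemma LM_eq_PP_add :
    LM ℂ G = PP G univ + ∑ M ∈ (matchings G).erase ∅, (-1) ^ M.card * PP G (univ \ covered M) := by
  rw [LM_eq_sum, ← Finset.insert_erase (empty_mem_matchings (G := G)),
    Finset.sum_insert (Finset.notMem_erase ∅ _)]
  simp [covered_empty]

lemma degree_rest_lt (hn : 0 < Fintype.card V) {M : Finset (Sym2 V)}
    (hM : M ∈ (matchings G).erase ∅) :
    ((-1) ^ M.card * PP G (univ \ covered M)).degree < (Fintype.card V : ℕ) := by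
  obtain ⟨hne, hM'⟩ := Finset.mem_erase.1 hM
  have hcard : 1 ≤ M.card := Finset.card_pos.2 (Finset.nonempty_iff_ne_empty.2 hne)
  have h2n := two_card_le hM'
  calc ((-1) ^ M.card * PP G (univ \ covered M)).degree
      ≤ ((-1 : Polynomial ℂ) ^ M.card).degree + (PP G (univ \ covered M)).degree :=
        degree_mul_le _ _
    _ ≤ 0 + ((Fintype.card V - 2 * M.card : ℕ) : WithBot ℕ) := by
        gcongr
        · calc ((-1 : Polynomial ℂ) ^ M.card).degree ≤ M.card • (-1 : Polynomial ℂ).degree :=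
              degree_pow_le _ _
          _ ≤ 0 := by simp
        · rw [PP_degree, card_sdiff_covered hM']
    _ < (Fintype.card V : ℕ) := by
        rw [zero_add, Nat.cast_lt]
        omega

lemma LM_monic : (LM ℂ G).Monic := by
  rcases Nat.eq_zero_or_pos (Fintype.card V) with h0 | hn
  · have : matchings G = {∅} := by
      apply Finset.eq_singleton_iff_unique_mem.2
      refine ⟨empty_mem_matchings, fun M hM => ?_⟩
      have := two_card_le hM
      rw [h0] at this
      simpa using Finset.card_eq_zero.1 (by omega)
    rw [LM_eq_sum, this]
    simp only [Finset.sum_singleton, Finset.card_empty, pow_zero, one_mul]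
    exact PP_monic _
  · rw [LM_eq_PP_add]
    apply Polynomial.Monic.add_of_left (PP_monic univ)
    calc (∑ M ∈ (matchings G).erase ∅, (-1) ^ M.card * PP G (univ \ covered M)).degree
        ≤ ((matchings G).erase ∅).sup (fun M => ((-1) ^ M.card * PP G (univ \ covered M)).degree) :=
          Polynomial.degree_sum_le _ _
      _ < (Fintype.card V : ℕ) := by
          rw [Finset.sup_lt_iff (by exact WithBot.bot_lt_coe _)]
          exact fun M hM => degree_rest_lt hn hM
      _ ≤ (PP G univ).degree := by rw [PP_degree, Finset.card_univ]

lemma LM_degree : (LM ℂ G).degree = (Fintype.card V : ℕ) := by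
  rcases Nat.eq_zero_or_pos (Fintype.card V) with h0 | hn
  · have : matchings G = {∅} := by
      apply Finset.eq_singleton_iff_unique_mem.2
      refine ⟨empty_mem_matchings, fun M hM => ?_⟩
      have := two_card_le hM
      rw [h0] at this
      simpa using Finset.card_eq_zero.1 (by omega)
    rw [LM_eq_sum, this]
    simp only [Finset.sum_singleton, Finset.card_empty, pow_zero, one_mul, covered_empty,
      Finset.sdiff_empty]
    rw [PP_degree, Finset.card_univ]
  · rw [LM_eq_PP_add, Polynomial.degree_add_eq_left_of_degree_lt, PP_degree, Finset.card_univ]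
    apply lt_of_le_of_lt (Polynomial.degree_sum_le _ _)
    rw [PP_degree, Finset.card_univ]
    rw [Finset.sup_lt_iff (by exact WithBot.bot_lt_coe _)]
    exact fun M hM => degree_rest_lt hn hM

lemma LM_natDegree : (LM ℂ G).natDegree = Fintype.card V :=
  Polynomial.natDegree_eq_of_degree_eq_some LM_degree

end PolyAux

section CoeffAux
variable [Fintype V] {G : SimpleGraph V}

lemma neg_one_pow_two_mul_eq (a : ℕ) : ((-1 : ℂ)) ^ (2 * a) = 1 := by
  rw [pow_mul]; norm_num

lemma coeff_neg_one_pow_mul (c : ℕ) (p : Polynomial ℂ) (j : ℕ) :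
    ((-1) ^ c * p).coeff j = (-1 : ℂ) ^ c * p.coeff j := by
  have h : ((-1 : Polynomial ℂ)) ^ c * p = C ((-1 : ℂ) ^ c) * p := by
    simp
  rw [h, coeff_C_mul]

lemma LM_coeff {k : ℕ} (hk : k ≤ Fintype.card V) :
    (LM ℂ G).coeff (Fintype.card V - k) =
      ∑ M ∈ (matchings G).filter (fun M => 2 * M.card ≤ k),
        (-1) ^ M.card * ((-1) ^ (k - 2 * M.card) * (restD G M).esymm (k - 2 * M.card)) := by
  set n := Fintype.card V with hn
  rw [LM_eq_sum, Polynomial.finset_sum_coeff,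
    ← Finset.sum_filter_add_sum_filter_not (matchings G) (fun M => 2 * M.card ≤ k)]
  have h2 : ∑ M ∈ (matchings G).filter (fun M => ¬ 2 * M.card ≤ k),
      ((-1) ^ M.card * PP G (univ \ covered M)).coeff (n - k) = 0 := by
    apply Finset.sum_eq_zero
    intro M hM
    obtain ⟨hM', hMk⟩ := Finset.mem_filter.1 hM
    have h2n := two_card_le hM'
    rw [coeff_neg_one_pow_mul, PP_coeff_zero _ (by rw [card_sdiff_covered hM']; omega), mul_zero]
  rw [h2, add_zero]
  refine Finset.sum_congr rfl fun M hM => ?_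
  obtain ⟨hM', hMk⟩ := Finset.mem_filter.1 hM
  have h2n := two_card_le hM'
  have hcard := card_sdiff_covered hM'
  have hj : n - k ≤ (univ \ covered M).card := by rw [hcard]; omega
  rw [coeff_neg_one_pow_mul, PP_coeff _ hj, hcard,
    show (n - 2 * M.card) - (n - k) = k - 2 * M.card from by omega]
  rfl

lemma roots_card : (LM ℂ G).roots.card = Fintype.card V := by
  rw [← LM_natDegree]
  exact Polynomial.splits_iff_card_roots.1 (IsAlgClosed.splits _)

lemma esymm_roots {k : ℕ} (hk : k ≤ Fintype.card V) :
    (LM ℂ G).roots.esymm k = (-1) ^ k * (LM ℂ G).coeff (Fintype.card V - k) := by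
  set n := Fintype.card V with hn
  have heq := (IsAlgClosed.splits _).eq_prod_roots_of_monic (LM_monic (G := G))
  have hc : (LM ℂ G).coeff (n - k) = (-1) ^ (n - (n - k)) * (LM ℂ G).roots.esymm (n - (n - k)) := by
    conv_lhs => rw [heq]
    have h := Multiset.prod_X_sub_C_coeff (LM ℂ G).roots (k := n - k)
      (by rw [roots_card]; omega)
    rw [roots_card] at h
    exact h
  rw [hc, show n - (n - k) = k from by omega, ← mul_assoc, ← pow_add,
    show k + k = 2 * k from by omega, neg_one_pow_two_mul_eq, one_mul]

lemma esymm_roots_eq (k : ℕ) :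
    (LM ℂ G).roots.esymm k =
      ∑ M ∈ (matchings G).filter (fun M => 2 * M.card ≤ k),
        (-1) ^ M.card * (restD G M).esymm (k - 2 * M.card) := by
  rcases le_or_gt k (Fintype.card V) with hk | hk
  · rw [esymm_roots hk, LM_coeff hk, Finset.mul_sum]
    refine Finset.sum_congr rfl fun M hM => ?_
    obtain ⟨hM', hMk⟩ := Finset.mem_filter.1 hM
    set c := M.card
    set E := (restD G M).esymm (k - 2 * c)
    set u := (-1 : ℂ) ^ (k - 2 * c) with hu
    have h2 : u * u = 1 := by
      rw [hu, ← pow_add, ← two_mul, pow_mul]; norm_num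
    have h1 : (-1 : ℂ) ^ k = u * ((-1) ^ (2 * c)) := by
      rw [hu, ← pow_add]; congr 1; omega
    rw [h1, neg_one_pow_two_mul_eq]
    linear_combination ((-1 : ℂ) ^ c * E) * h2
  · rw [esymm_card_lt (by rw [roots_card]; omega)]
    symm
    apply Finset.sum_eq_zero
    intro M hM
    obtain ⟨hM', hMk⟩ := Finset.mem_filter.1 hM
    have h2n := two_card_le hM'
    rw [esymm_card_lt (by rw [card_restD hM']; omega), mul_zero]

end CoeffAux

section SplitAux
variable [Fintype V] {G : SimpleGraph V}

lemma filter_card_zero :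
    (matchings G).filter (fun M => M.card = 0) = {(∅ : Finset (Sym2 V))} := by
  ext M
  simp only [Finset.mem_filter, Finset.mem_singleton, Finset.card_eq_zero]
  constructor
  · rintro ⟨_, h⟩; exact h
  · rintro rfl; exact ⟨empty_mem_matchings, rfl⟩

lemma singleton_mem_matchings {e : Sym2 V} (he : e ∈ edges G) : {e} ∈ matchings G := by
  rw [mem_matchings]
  constructor
  · intro f hf
    simp only [Finset.coe_singleton, Set.mem_singleton_iff] at hf
    subst hf; exact mem_edges.1 he
  · intro a ha b hb hab
    simp only [Finset.mem_singleton] at ha hb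
    subst ha; subst hb; exact absurd rfl hab

lemma filter_card_one :
    (matchings G).filter (fun M => M.card = 1) = (edges G).image (fun e => {e}) := by
  ext M
  simp only [Finset.mem_filter, Finset.mem_image]
  constructor
  · rintro ⟨hM, hc⟩
    obtain ⟨e, rfl⟩ := Finset.card_eq_one.1 hc
    exact ⟨e, mem_edges.2 (edge_mem_edgeSet hM (Finset.mem_singleton_self e)), rfl⟩
  · rintro ⟨e, he, rfl⟩
    exact ⟨singleton_mem_matchings he, Finset.card_singleton e⟩

lemma sum_matchings_le_one (f : Finset (Sym2 V) → ℂ) :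
    ∑ M ∈ (matchings G).filter (fun M => M.card ≤ 1), f M
      = f ∅ + ∑ e ∈ edges G, f {e} := by
  have hsplit : (matchings G).filter (fun M => M.card ≤ 1)
      = (matchings G).filter (fun M => M.card = 0) ∪ (matchings G).filter (fun M => M.card = 1) := by
    rw [← Finset.filter_or]
    apply Finset.filter_congr
    intro M _
    constructor
    · intro h; omega
    · intro h; omega
  rw [hsplit, Finset.sum_union, filter_card_zero, filter_card_one, Finset.sum_singleton,
    Finset.sum_image (fun a _ b _ h => Finset.singleton_injective h)]
  · rw [Finset.disjoint_left]
    rintro M hM hM'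
    have h0 := (Finset.mem_filter.1 hM).2
    have h1 := (Finset.mem_filter.1 hM').2
    omega

lemma sum_matchings_le_two (f : Finset (Sym2 V) → ℂ) :
    ∑ M ∈ (matchings G).filter (fun M => M.card ≤ 2), f M
      = f ∅ + ∑ e ∈ edges G, f {e}
        + ∑ M ∈ (matchings G).filter (fun M => M.card = 2), f M := by
  have hsplit : (matchings G).filter (fun M => M.card ≤ 2)
      = (matchings G).filter (fun M => M.card ≤ 1) ∪ (matchings G).filter (fun M => M.card = 2) := by
    rw [← Finset.filter_or]
    apply Finset.filter_congr
    intro M _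
    constructor
    · intro h; omega
    · intro h; omega
  rw [hsplit, Finset.sum_union, sum_matchings_le_one]
  rw [Finset.disjoint_left]
  rintro M hM hM'
  have h0 := (Finset.mem_filter.1 hM).2
  have h1 := (Finset.mem_filter.1 hM').2
  omega

end SplitAux

section RestAux
variable [Fintype V] {G : SimpleGraph V}

lemma covered_singleton (e : Sym2 V) :
    covered ({e} : Finset (Sym2 V)) = univ.filter (· ∈ e) := by
  ext z; simp [covered]

lemma restD_singleton {x y : V} (hxy : x ≠ y) :
    restD G {s(x,y)} = ((univ \ ({x, y} : Finset V)).val.map (degC G)) := by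
  rw [restD, covered_singleton, filter_mem_eq_pair hxy]

lemma univ_val_cons {x y : V} (hxy : x ≠ y) :
    (univ : Finset V).val = x ::ₘ y ::ₘ (univ \ ({x, y} : Finset V)).val := by
  have h1 : (univ \ ({x, y} : Finset V)) = (univ.erase x).erase y := by
    ext z
    simp only [Finset.mem_sdiff, Finset.mem_erase, Finset.mem_univ, Finset.mem_insert,
      Finset.mem_singleton, true_and, and_true]
    tauto
  have hy : y ∈ (univ.val.erase x) := by
    rw [Multiset.mem_erase_of_ne hxy.symm]
    simp
  rw [h1, Finset.erase_val, Finset.erase_val, Multiset.cons_erase hy,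
    Multiset.cons_erase (by simp : x ∈ (univ : Finset V).val)]

lemma DD_cons {x y : V} (hxy : x ≠ y) :
    DD G = degC G x ::ₘ degC G y ::ₘ ((univ \ ({x, y} : Finset V)).val.map (degC G)) := by
  rw [DD, univ_val_cons hxy, Multiset.map_cons, Multiset.map_cons]

lemma rest_esymm1 {x y : V} (hxy : x ≠ y) :
    ((univ \ ({x, y} : Finset V)).val.map (degC G)).esymm 1
      = (DD G).esymm 1 - (degC G x + degC G y) := by
  set r := ((univ \ ({x, y} : Finset V)).val.map (degC G))
  have e1 : (DD G).esymm 1 = degC G x * (degC G y ::ₘ r).esymm 0 + (degC G y ::ₘ r).esymm 1 := by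
    rw [DD_cons hxy]; exact esymm_cons _ _ 0
  rw [esymm_cons, esymm_zero', esymm_zero'] at e1
  linear_combination -e1

lemma rest_esymm2 {x y : V} (hxy : x ≠ y) :
    ((univ \ ({x, y} : Finset V)).val.map (degC G)).esymm 2
      = (DD G).esymm 2 - (degC G x + degC G y) * (DD G).esymm 1
        + (degC G x + degC G y) ^ 2 - degC G x * degC G y := by
  set a := degC G x
  set b := degC G y
  set r := ((univ \ ({x, y} : Finset V)).val.map (degC G))
  have e2 : (DD G).esymm 2 = a * (b ::ₘ r).esymm 1 + (b ::ₘ r).esymm 2 := by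
    rw [DD_cons hxy]; exact esymm_cons _ _ 1
  rw [esymm_cons, esymm_cons, esymm_zero', esymm_one'] at e2
  have hr1 := rest_esymm1 (G := G) hxy
  rw [esymm_one'] at hr1
  linear_combination -e2 - (a + b) * hr1

lemma rest_esymm3 {x y : V} (hxy : x ≠ y) :
    ((univ \ ({x, y} : Finset V)).val.map (degC G)).esymm 3
      = (DD G).esymm 3 - (degC G x + degC G y) * (DD G).esymm 2
        + ((degC G x + degC G y) ^ 2 - degC G x * degC G y) * (DD G).esymm 1
        - (degC G x + degC G y) ^ 3
        + 2 * (degC G x + degC G y) * (degC G x * degC G y) := by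
  set a := degC G x
  set b := degC G y
  set r := ((univ \ ({x, y} : Finset V)).val.map (degC G))
  have e3 : (DD G).esymm 3 = a * (b ::ₘ r).esymm 2 + (b ::ₘ r).esymm 3 := by
    rw [DD_cons hxy]; exact esymm_cons _ _ 2
  rw [esymm_cons, esymm_cons, esymm_one'] at e3
  have hr1 := rest_esymm1 (G := G) hxy
  rw [esymm_one'] at hr1
  have hr2 := rest_esymm2 (G := G) hxy
  linear_combination -e3 - (a * b) * hr1 - (a + b) * hr2

end RestAux

section EdgeSumAux
variable [Fintype V] {G : SimpleGraph V}

/-- `W(e) = d(x)+d(y)` as a function on `Sym2 V`. -/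
noncomputable def Wf (G : SimpleGraph V) : Sym2 V → ℂ :=
  Sym2.lift ⟨fun x y => degC G x + degC G y, fun x y => by ring⟩

/-- `Q(e) = d(x)·d(y)` as a function on `Sym2 V`. -/
noncomputable def Qf (G : SimpleGraph V) : Sym2 V → ℂ :=
  Sym2.lift ⟨fun x y => degC G x * degC G y, fun x y => by ring⟩

lemma Wf_mk (x y : V) : Wf G s(x,y) = degC G x + degC G y := rfl

lemma Qf_mk (x y : V) : Qf G s(x,y) = degC G x * degC G y := rfl

lemma inner_const (g : V → ℂ) :
    ∑ v : V, ∑ _w ∈ univ.filter (fun w => G.Adj v w), g v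
      = ∑ v : V, (deg G v : ℂ) * g v := by
  refine Finset.sum_congr rfl fun v _ => ?_
  rw [Finset.sum_const, nsmul_eq_mul]
  rfl

lemma swap_sum (g : V → ℂ) :
    ∑ v : V, ∑ w ∈ univ.filter (fun w => G.Adj v w), g w
      = ∑ v : V, (deg G v : ℂ) * g v := by
  simp only [Finset.sum_filter]
  rw [Finset.sum_comm]
  refine Finset.sum_congr rfl fun w _ => ?_
  have h1 : ∀ v : V, (if G.Adj v w then g w else 0) = (if G.Adj w v then g w else 0) := by
    intro v; rw [G.adj_comm]
  simp only [h1]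
  rw [← Finset.sum_filter, Finset.sum_const, nsmul_eq_mul]
  rfl

lemma sum_adj_pairs (F : Sym2 V → ℂ) (f : V → V → ℂ) (hmk : ∀ x y, F s(x,y) = f x y) :
    ∑ v : V, ∑ w ∈ univ.filter (fun w => G.Adj v w), f v w
      = 2 * ∑ e ∈ edges G, F e := by
  have h1 : ∑ v : V, ∑ w ∈ univ.filter (fun w => G.Adj v w), f v w
      = ∑ p ∈ (univ ×ˢ univ).filter (fun p => G.Adj p.1 p.2), f p.1 p.2 := by
    rw [Finset.sum_filter, Finset.sum_product]
    simp only [Finset.sum_filter]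
  rw [h1, ← Finset.sum_fiberwise_of_maps_to
    (g := fun p : V × V => s(p.1, p.2)) (t := edges G)
    (fun p hp => mem_edges.2 ((G.mem_edgeSet).2 (Finset.mem_filter.1 hp).2)),
    Finset.mul_sum]
  refine Finset.sum_congr rfl fun e he => ?_
  induction e using Sym2.ind with
  | _ x y =>
      have hadj : G.Adj x y := (G.mem_edgeSet).1 (mem_edges.1 he)
      have hxy : x ≠ y := G.ne_of_adj hadj
      have hfib : ((univ ×ˢ univ).filter (fun p => G.Adj p.1 p.2)).filter
          (fun p => s(p.1, p.2) = s(x, y)) = {(x, y), (y, x)} := by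
        ext ⟨a, b⟩
        simp only [Finset.mem_filter, Finset.mem_product, Finset.mem_univ, true_and,
          Finset.mem_insert, Finset.mem_singleton, Sym2.eq_iff, Prod.mk.injEq]
        constructor
        · rintro ⟨_, h | h⟩
          · left; exact ⟨h.1, h.2⟩
          · right; exact ⟨h.1, h.2⟩
        · rintro (⟨rfl, rfl⟩ | ⟨rfl, rfl⟩)
          · exact ⟨hadj, Or.inl ⟨rfl, rfl⟩⟩
          · exact ⟨hadj.symm, Or.inr ⟨rfl, rfl⟩⟩
      rw [hfib, Finset.sum_pair (by simp [hxy, Prod.ext_iff] : ((x,y) : V × V) ≠ (y,x))]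
      rw [← hmk x y, ← hmk y x, Sym2.eq_swap (a := y) (b := x)]
      ring

lemma A_cast (r : ℕ) : ((A G r : ℂ)) = ∑ v : V, (degC G v) ^ r := by
  rw [A]
  push_cast
  rfl

lemma B_cast : ((B G : ℂ)) = ∑ e ∈ edges G, Qf G e := by
  rw [B, Nat.cast_sum]
  refine Finset.sum_congr rfl fun e _ => ?_
  induction e using Sym2.ind with
  | _ x y =>
      rw [Qf_mk]
      push_cast [Sym2.lift_mk]
      rfl

lemma C_cast : ((Csum G : ℂ)) = ∑ e ∈ edges G, Wf G e * Qf G e := by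
  rw [Csum, Nat.cast_sum]
  refine Finset.sum_congr rfl fun e _ => ?_
  induction e using Sym2.ind with
  | _ x y =>
      rw [Wf_mk, Qf_mk]
      push_cast [Sym2.lift_mk]
      simp only [degC]
      ring

lemma deg_weighted (r : ℕ) : ∑ v : V, (deg G v : ℂ) * (degC G v) ^ r = (A G (r+1) : ℂ) := by
  rw [A_cast]
  exact Finset.sum_congr rfl fun v _ => by rw [degC, pow_succ]; ring

lemma sum_Qf_double :
    ∑ v : V, ∑ w ∈ univ.filter (fun w => G.Adj v w), degC G v * degC G w
      = 2 * (B G : ℂ) := by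
  rw [B_cast]
  exact sum_adj_pairs (Qf G) _ Qf_mk

lemma sum_Wf : ∑ e ∈ edges G, Wf G e = (A G 2 : ℂ) := by
  have h := sum_adj_pairs (G := G) (Wf G) (fun x y => degC G x + degC G y) Wf_mk
  beta_reduce at h
  have hL : ∑ v : V, ∑ w ∈ univ.filter (fun w => G.Adj v w), (degC G v + degC G w)
      = 2 * (A G 2 : ℂ) := by
    simp only [Finset.sum_add_distrib]
    rw [inner_const, swap_sum]
    have h1 := deg_weighted (G := G) 1
    simp only [pow_one] at h1
    rw [h1]
    ring
  rw [hL] at h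
  exact (mul_left_cancel₀ two_ne_zero h).symm

lemma sum_Wf_sq : ∑ e ∈ edges G, (Wf G e) ^ 2 = (A G 3 : ℂ) + 2 * (B G : ℂ) := by
  have h := sum_adj_pairs (G := G) (fun e => (Wf G e) ^ 2)
    (fun x y => (degC G x + degC G y) ^ 2) (fun x y => by simp only [Wf_mk])
  beta_reduce at h
  have hL : ∑ v : V, ∑ w ∈ univ.filter (fun w => G.Adj v w), (degC G v + degC G w) ^ 2
      = 2 * ((A G 3 : ℂ) + 2 * (B G : ℂ)) := by
    have hcong : ∀ v : V, ∑ w ∈ univ.filter (fun w => G.Adj v w), (degC G v + degC G w) ^ 2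
        = ∑ w ∈ univ.filter (fun w => G.Adj v w),
            ((degC G v) ^ 2 + ((degC G w) ^ 2 + (degC G v * degC G w + degC G v * degC G w))) :=
      fun v => Finset.sum_congr rfl fun w _ => by ring
    simp only [hcong, Finset.sum_add_distrib]
    rw [inner_const (fun v => (degC G v) ^ 2), swap_sum (fun w => (degC G w) ^ 2),
      sum_Qf_double, deg_weighted 2]
    ring
  rw [hL] at h
  exact (mul_left_cancel₀ two_ne_zero h).symm

lemma sum_Wf_cube :
    ∑ e ∈ edges G, (Wf G e) ^ 3 = (A G 4 : ℂ) + 3 * (Csum G : ℂ) := by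
  have hWQ := sum_adj_pairs (G := G) (fun e => Wf G e * Qf G e)
    (fun x y => (degC G x + degC G y) * (degC G x * degC G y))
    (fun x y => by simp only [Wf_mk, Qf_mk])
  beta_reduce at hWQ
  have h := sum_adj_pairs (G := G) (fun e => (Wf G e) ^ 3)
    (fun x y => (degC G x + degC G y) ^ 3) (fun x y => by simp only [Wf_mk])
  beta_reduce at h
  have hL : ∑ v : V, ∑ w ∈ univ.filter (fun w => G.Adj v w), (degC G v + degC G w) ^ 3
      = 2 * ((A G 4 : ℂ) + 3 * (Csum G : ℂ)) := by
    have hcong : ∀ v : V, ∑ w ∈ univ.filter (fun w => G.Adj v w), (degC G v + degC G w) ^ 3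
        = ∑ w ∈ univ.filter (fun w => G.Adj v w),
            ((degC G v) ^ 3 + ((degC G w) ^ 3
              + ((degC G v + degC G w) * (degC G v * degC G w)
                + ((degC G v + degC G w) * (degC G v * degC G w)
                  + (degC G v + degC G w) * (degC G v * degC G w))))) :=
      fun v => Finset.sum_congr rfl fun w _ => by ring
    simp only [hcong, Finset.sum_add_distrib]
    rw [inner_const (fun v => (degC G v) ^ 3), swap_sum (fun w => (degC G w) ^ 3),
      deg_weighted 3, hWQ, C_cast]
    ring
  rw [hL] at h
  exact (mul_left_cancel₀ two_ne_zero h).symm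

end EdgeSumAux

section CountAux
variable [Fintype V] {G : SimpleGraph V}

lemma deg_eq_degree (v : V) : deg G v = G.degree v := by
  rw [← SimpleGraph.card_neighborFinset_eq_degree]
  unfold deg
  congr 1
  ext w
  simp [SimpleGraph.mem_neighborFinset]

lemma filter_mem_edges_card (x : V) :
    ((edges G).filter (fun f => x ∈ f)).card = deg G x := by
  have h1 : (edges G).filter (fun f => x ∈ f) = G.incidenceFinset x := by
    ext f
    simp [mem_edges, SimpleGraph.mem_incidenceFinset, SimpleGraph.incidenceSet]
  rw [h1, SimpleGraph.card_incidenceFinset_eq_degree, deg_eq_degree]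

lemma pair_filter_eq {x y : V} (hadj : G.Adj x y) :
    ((edges G).filter (fun f => x ∈ f ∧ y ∈ f)) = {s(x,y)} := by
  ext f
  simp only [Finset.mem_filter, Finset.mem_singleton, mem_edges]
  constructor
  · rintro ⟨_, hx, hy⟩
    exact (Sym2.mem_and_mem_iff (G.ne_of_adj hadj)).1 ⟨hx, hy⟩
  · rintro rfl
    refine ⟨(G.mem_edgeSet).2 hadj, ?_, ?_⟩ <;> simp

lemma deg_pos_of_adj {x y : V} (hadj : G.Adj x y) : 0 < deg G x := by
  unfold deg
  exact Finset.card_pos.2 ⟨y, by simp [hadj]⟩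

lemma card_disj_filter {x y : V} (hadj : G.Adj x y) :
    ((((edges G).filter (fun f => ∀ z : V, z ∈ s(x,y) → z ∉ f)).card : ℕ) : ℂ)
      = ((edges G).card : ℂ) + 1 - (deg G x : ℂ) - (deg G y : ℂ) := by
  have hsplit := Finset.card_filter_add_card_filter_not (s := edges G)
      (p := fun f => ∀ z : V, z ∈ s(x,y) → z ∉ f)
  have hneg : (edges G).filter (fun f => ¬ ∀ z : V, z ∈ s(x,y) → z ∉ f)
      = (edges G).filter (fun f => x ∈ f ∨ y ∈ f) := by
    apply Finset.filter_congr
    intro f _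
    constructor
    · intro h
      push_neg at h
      obtain ⟨z, hz, hzf⟩ := h
      rcases Sym2.mem_iff.1 hz with rfl | rfl
      · left; exact hzf
      · right; exact hzf
    · intro h hall
      rcases h with h | h
      · exact hall x (by simp) h
      · exact hall y (by simp) h
  have hor : ((edges G).filter (fun f => x ∈ f ∨ y ∈ f)).card + 1
      = deg G x + deg G y := by
    rw [Finset.filter_or]
    have hinter : ((edges G).filter (fun f => x ∈ f)) ∩ ((edges G).filter (fun f => y ∈ f))
        = {s(x,y)} := by
      rw [← Finset.filter_and]
      exact pair_filter_eq hadj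
    have hu := Finset.card_union_add_card_inter
      ((edges G).filter (fun f => x ∈ f)) ((edges G).filter (fun f => y ∈ f))
    rw [hinter, Finset.card_singleton, filter_mem_edges_card, filter_mem_edges_card] at hu
    exact hu
  have hx1 := deg_pos_of_adj hadj
  have hy1 := deg_pos_of_adj hadj.symm
  rw [hneg] at hsplit
  have hnat : ((edges G).filter (fun f => ∀ z : V, z ∈ s(x,y) → z ∉ f)).card
      + (deg G x + deg G y) = (edges G).card + 1 := by omega
  have hc := congrArg (Nat.cast : ℕ → ℂ) hnat
  push_cast at hc
  linear_combination hc

lemma sym2_nonempty (e : Sym2 V) : ∃ z : V, z ∈ e := ⟨e.out.1, Sym2.out_fst_mem e⟩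

lemma sum_two_matchings_W :
    ∑ M ∈ (matchings G).filter (fun M => M.card = 2), (∑ g ∈ M, Wf G g)
      = ∑ e ∈ edges G,
          ((((edges G).filter (fun f => ∀ z : V, z ∈ e → z ∉ f)).card : ℕ) : ℂ) * Wf G e := by
  have hmaps : ∀ p ∈ ((edges G) ×ˢ (edges G)).filter (fun p => ∀ z : V, z ∈ p.1 → z ∉ p.2),
      ({p.1, p.2} : Finset (Sym2 V)) ∈ (matchings G).filter (fun M => M.card = 2) := by
    rintro ⟨a, b⟩ hp
    obtain ⟨hab', hD⟩ := Finset.mem_filter.1 hp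
    obtain ⟨ha, hb⟩ := Finset.mem_product.1 hab'
    obtain ⟨z, hz⟩ := sym2_nonempty a
    have hne : a ≠ b := fun h => hD z hz (h ▸ hz)
    rw [Finset.mem_filter]
    constructor
    · rw [mem_matchings]
      constructor
      · intro f hf
        simp only [Finset.coe_insert, Finset.coe_singleton, Set.mem_insert_iff,
          Set.mem_singleton_iff] at hf
        rcases hf with rfl | rfl
        · exact mem_edges.1 ha
        · exact mem_edges.1 hb
      · intro e he f hf hef w hwe
        simp only [Finset.mem_insert, Finset.mem_singleton] at he hf
        rcases he with rfl | rfl <;> rcases hf with rfl | rfl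
        · exact absurd rfl hef
        · exact hD w hwe
        · intro hwf
          exact hD w hwf hwe
        · exact absurd rfl hef
    · exact Finset.card_pair hne
  have h1 := Finset.sum_fiberwise_of_maps_to hmaps (fun p : Sym2 V × Sym2 V => Wf G p.1)
  -- h1 : ∑ M ∈ filter, ∑ p ∈ bigfilter.filter (pair = M), Wf p.1 = ∑ p ∈ bigfilter, Wf p.1
  have h2 : ∀ M ∈ (matchings G).filter (fun M => M.card = 2),
      ∑ p ∈ (((edges G) ×ˢ (edges G)).filter (fun p => ∀ z : V, z ∈ p.1 → z ∉ p.2)).filter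
          (fun p => ({p.1, p.2} : Finset (Sym2 V)) = M), Wf G p.1
        = ∑ g ∈ M, Wf G g := by
    intro M hM
    obtain ⟨hM', hc⟩ := Finset.mem_filter.1 hM
    obtain ⟨e, f, hef, rfl⟩ := Finset.card_eq_two.1 hc
    have he : e ∈ edges G := mem_edges.2 (edge_mem_edgeSet hM' (by simp))
    have hf : f ∈ edges G := mem_edges.2 (edge_mem_edgeSet hM' (by simp))
    have hDef : ∀ z : V, z ∈ e → z ∉ f :=
      (mem_matchings.1 hM').2 e (by simp) f (by simp) hef
    have hDfe : ∀ z : V, z ∈ f → z ∉ e :=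
      (mem_matchings.1 hM').2 f (by simp) e (by simp) hef.symm
    have hfib : (((edges G) ×ˢ (edges G)).filter (fun p => ∀ z : V, z ∈ p.1 → z ∉ p.2)).filter
          (fun p => ({p.1, p.2} : Finset (Sym2 V)) = {e, f})
        = {(e, f), (f, e)} := by
      ext ⟨a, b⟩
      simp only [Finset.mem_filter, Finset.mem_product, Finset.mem_insert, Finset.mem_singleton,
        Prod.mk.injEq]
      constructor
      · rintro ⟨⟨⟨ha, hb⟩, hD⟩, hpair⟩
        obtain ⟨z, hz⟩ := sym2_nonempty a
        have hab : a ≠ b := fun h => hD z hz (h ▸ hz)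
        have haef : a = e ∨ a = f := by
          have : a ∈ ({e, f} : Finset (Sym2 V)) := by rw [← hpair]; simp
          simpa using this
        have hbef : b = e ∨ b = f := by
          have : b ∈ ({e, f} : Finset (Sym2 V)) := by rw [← hpair]; simp
          simpa using this
        have hemem : e ∈ ({a, b} : Finset (Sym2 V)) := by rw [hpair]; simp
        have hfmem : f ∈ ({a, b} : Finset (Sym2 V)) := by rw [hpair]; simp
        simp only [Finset.mem_insert, Finset.mem_singleton] at hemem hfmem
        rcases haef with rfl | rfl
        · left; refine ⟨rfl, ?_⟩; tauto
        · right; refine ⟨rfl, ?_⟩; tauto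
      · rintro (⟨rfl, rfl⟩ | ⟨rfl, rfl⟩)
        · exact ⟨⟨⟨he, hf⟩, hDef⟩, rfl⟩
        · exact ⟨⟨⟨hf, he⟩, hDfe⟩, Finset.pair_comm _ _⟩
    rw [hfib, Finset.sum_pair (by simp [Prod.ext_iff, hef] : ((e,f) : Sym2 V × Sym2 V) ≠ (f,e)),
      Finset.sum_pair hef]
  rw [← Finset.sum_congr rfl h2, h1]
  -- now ordered pair sum to per-edge count
  rw [Finset.sum_filter, Finset.sum_product]
  refine Finset.sum_congr rfl fun e _ => ?_
  rw [← Finset.sum_filter]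
  have hconst : ∑ _a ∈ (edges G).filter (fun f => ∀ z : V, z ∈ e → z ∉ f), Wf G e
      = ((((edges G).filter (fun f => ∀ z : V, z ∈ e → z ∉ f)).card : ℕ) : ℂ) * Wf G e := by
    rw [Finset.sum_const, nsmul_eq_mul]
  exact hconst

end CountAux

section FinalAux
variable [Fintype V] {G : SimpleGraph V}

lemma restD_empty : restD G ∅ = DD G := by
  rw [restD, covered_empty, Finset.sdiff_empty]
  rfl

lemma hper1 : ∀ e ∈ edges G, (restD G {e}).esymm 1 = (DD G).esymm 1 - Wf G e := by
  intro e he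
  induction e using Sym2.ind with
  | _ x y =>
      have hadj : G.Adj x y := (G.mem_edgeSet).1 (mem_edges.1 he)
      rw [restD_singleton (G.ne_of_adj hadj), rest_esymm1 (G.ne_of_adj hadj), Wf_mk]

lemma hper2 : ∀ e ∈ edges G, (restD G {e}).esymm 2
    = (DD G).esymm 2 - Wf G e * (DD G).esymm 1 + (Wf G e) ^ 2 - Qf G e := by
  intro e he
  induction e using Sym2.ind with
  | _ x y =>
      have hadj : G.Adj x y := (G.mem_edgeSet).1 (mem_edges.1 he)
      rw [restD_singleton (G.ne_of_adj hadj), rest_esymm2 (G.ne_of_adj hadj), Wf_mk, Qf_mk]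

lemma hper3 : ∀ e ∈ edges G, (restD G {e}).esymm 3
    = (DD G).esymm 3 - Wf G e * (DD G).esymm 2 + ((Wf G e) ^ 2 - Qf G e) * (DD G).esymm 1
      - (Wf G e) ^ 3 + 2 * Wf G e * Qf G e := by
  intro e he
  induction e using Sym2.ind with
  | _ x y =>
      have hadj : G.Adj x y := (G.mem_edgeSet).1 (mem_edges.1 he)
      rw [restD_singleton (G.ne_of_adj hadj), rest_esymm3 (G.ne_of_adj hadj), Wf_mk, Qf_mk]

lemma esymm_roots_one : (LM ℂ G).roots.esymm 1 = (DD G).esymm 1 := by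
  rw [esymm_roots_eq 1]
  have hf : (matchings G).filter (fun M => 2 * M.card ≤ 1)
      = (matchings G).filter (fun M => M.card = 0) :=
    Finset.filter_congr (fun M _ => by omega)
  rw [hf, filter_card_zero, Finset.sum_singleton]
  simp [restD_empty]

lemma esymm_roots_two :
    (LM ℂ G).roots.esymm 2 = (DD G).esymm 2 - ((edges G).card : ℂ) := by
  rw [esymm_roots_eq 2]
  have hf : (matchings G).filter (fun M => 2 * M.card ≤ 2)
      = (matchings G).filter (fun M => M.card ≤ 1) :=
    Finset.filter_congr (fun M _ => by omega)
  rw [hf]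
  have hsplit : ∑ M ∈ (matchings G).filter (fun M => M.card ≤ 1),
      (-1) ^ M.card * (restD G M).esymm (2 - 2 * M.card)
    = (-1) ^ (∅ : Finset (Sym2 V)).card
        * (restD G ∅).esymm (2 - 2 * (∅ : Finset (Sym2 V)).card)
      + ∑ e ∈ edges G, (-1) ^ ({e} : Finset (Sym2 V)).card
        * (restD G {e}).esymm (2 - 2 * ({e} : Finset (Sym2 V)).card) :=
    sum_matchings_le_one _
  rw [hsplit]
  simp only [Finset.card_empty, Finset.card_singleton, restD_empty, pow_zero, pow_one, one_mul,
    mul_zero, Nat.sub_zero, neg_one_mul]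
  norm_num [esymm_zero']
  ring

lemma esymm_roots_three :
    (LM ℂ G).roots.esymm 3 = (DD G).esymm 3
      - (((edges G).card : ℂ) * (DD G).esymm 1 - (A G 2 : ℂ)) := by
  rw [esymm_roots_eq 3]
  have hf : (matchings G).filter (fun M => 2 * M.card ≤ 3)
      = (matchings G).filter (fun M => M.card ≤ 1) :=
    Finset.filter_congr (fun M _ => by omega)
  rw [hf]
  have hsplit : ∑ M ∈ (matchings G).filter (fun M => M.card ≤ 1),
      (-1) ^ M.card * (restD G M).esymm (3 - 2 * M.card)
    = (-1) ^ (∅ : Finset (Sym2 V)).card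
        * (restD G ∅).esymm (3 - 2 * (∅ : Finset (Sym2 V)).card)
      + ∑ e ∈ edges G, (-1) ^ ({e} : Finset (Sym2 V)).card
        * (restD G {e}).esymm (3 - 2 * ({e} : Finset (Sym2 V)).card) :=
    sum_matchings_le_one _
  rw [hsplit]
  simp only [Finset.card_empty, Finset.card_singleton, restD_empty, pow_zero, pow_one, one_mul,
    mul_zero, Nat.sub_zero, neg_one_mul]
  norm_num
  have hS : ∑ e ∈ edges G, (restD G {e}).esymm 1
      = ((edges G).card : ℂ) * (DD G).esymm 1 - (A G 2 : ℂ) := by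
    rw [Finset.sum_congr rfl hper1, Finset.sum_sub_distrib, Finset.sum_const, nsmul_eq_mul,
      sum_Wf]
  rw [hS]
  ring

lemma esymm_roots_four :
    (LM ℂ G).roots.esymm 4 = (DD G).esymm 4
      - (((edges G).card : ℂ) * (DD G).esymm 2 - (A G 2 : ℂ) * (DD G).esymm 1
          + ((A G 3 : ℂ) + 2 * (B G : ℂ)) - (B G : ℂ))
      + (phi2 G : ℂ) := by
  rw [esymm_roots_eq 4]
  have hf : (matchings G).filter (fun M => 2 * M.card ≤ 4)
      = (matchings G).filter (fun M => M.card ≤ 2) :=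
    Finset.filter_congr (fun M _ => by omega)
  rw [hf]
  have hsplit : ∑ M ∈ (matchings G).filter (fun M => M.card ≤ 2),
      (-1) ^ M.card * (restD G M).esymm (4 - 2 * M.card)
    = (-1) ^ (∅ : Finset (Sym2 V)).card
        * (restD G ∅).esymm (4 - 2 * (∅ : Finset (Sym2 V)).card)
      + ∑ e ∈ edges G, (-1) ^ ({e} : Finset (Sym2 V)).card
        * (restD G {e}).esymm (4 - 2 * ({e} : Finset (Sym2 V)).card)
      + ∑ M ∈ (matchings G).filter (fun M => M.card = 2),
        (-1) ^ M.card * (restD G M).esymm (4 - 2 * M.card) :=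
    sum_matchings_le_two _
  rw [hsplit]
  have h2M : ∑ M ∈ (matchings G).filter (fun M => M.card = 2),
      (-1 : ℂ) ^ M.card * (restD G M).esymm (4 - 2 * M.card) = (phi2 G : ℂ) := by
    rw [Finset.sum_congr rfl (fun M hM => ?_), Finset.sum_const, nsmul_eq_mul, mul_one, phi2]
    have hc : M.card = 2 := (Finset.mem_filter.1 hM).2
    rw [hc]
    norm_num [esymm_zero']
  rw [h2M]
  simp only [Finset.card_empty, Finset.card_singleton, restD_empty, pow_zero, pow_one, one_mul,
    mul_zero, Nat.sub_zero, neg_one_mul]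
  norm_num
  have hS : ∑ e ∈ edges G, (restD G {e}).esymm 2
      = ((edges G).card : ℂ) * (DD G).esymm 2 - (A G 2 : ℂ) * (DD G).esymm 1
        + ((A G 3 : ℂ) + 2 * (B G : ℂ)) - (B G : ℂ) := by
    rw [Finset.sum_congr rfl hper2]
    simp only [Finset.sum_sub_distrib, Finset.sum_add_distrib]
    rw [Finset.sum_const, nsmul_eq_mul, ← Finset.sum_mul, sum_Wf, sum_Wf_sq, ← B_cast]
  rw [hS]
  ring

lemma esymm1_restD {M : Finset (Sym2 V)} (hM : M ∈ matchings G) :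
    (restD G M).esymm 1 = (DD G).esymm 1 - ∑ g ∈ M, Wf G g := by
  rw [esymm_one', esymm_one']
  have h1 : (restD G M).sum = ∑ v ∈ univ \ covered M, degC G v := rfl
  have h2 : (DD G).sum = ∑ v : V, degC G v := rfl
  rw [h1, h2, Finset.sum_sdiff_eq_sub (Finset.subset_univ _)]
  congr 1
  have hdisj : (↑M : Set (Sym2 V)).Pairwise (Function.onFun Disjoint
      (fun e => univ.filter (· ∈ e))) := by
    intro e he f hf hef
    rw [Function.onFun, Finset.disjoint_left]
    intro z hz hz'
    exact (mem_matchings.1 hM).2 e (Finset.mem_coe.1 he) f (Finset.mem_coe.1 hf) hef z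
      (Finset.mem_filter.1 hz).2 (Finset.mem_filter.1 hz').2
  rw [covered_eq_biUnion, Finset.sum_biUnion hdisj]
  refine Finset.sum_congr rfl fun g hg => ?_
  have hgE := edge_mem_edgeSet hM hg
  induction g using Sym2.ind with
  | _ x y =>
      have hadj : G.Adj x y := (G.mem_edgeSet).1 hgE
      rw [filter_mem_eq_pair (G.ne_of_adj hadj), Finset.sum_pair (G.ne_of_adj hadj), Wf_mk]

lemma sum_2M_W_val :
    ∑ M ∈ (matchings G).filter (fun M => M.card = 2), (∑ g ∈ M, Wf G g)
      = (((edges G).card : ℂ) + 1) * (A G 2 : ℂ) - ((A G 3 : ℂ) + 2 * (B G : ℂ)) := by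
  rw [sum_two_matchings_W]
  have hcong : ∀ e ∈ edges G,
      ((((edges G).filter (fun f => ∀ z : V, z ∈ e → z ∉ f)).card : ℕ) : ℂ) * Wf G e
        = (((edges G).card : ℂ) + 1) * Wf G e - (Wf G e) ^ 2 := by
    intro e he
    induction e using Sym2.ind with
    | _ x y =>
        have hadj : G.Adj x y := (G.mem_edgeSet).1 (mem_edges.1 he)
        rw [card_disj_filter hadj, Wf_mk]
        simp only [degC]
        ring
  rw [Finset.sum_congr rfl hcong, Finset.sum_sub_distrib, ← Finset.mul_sum, sum_Wf, sum_Wf_sq]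

lemma esymm_roots_five :
    (LM ℂ G).roots.esymm 5 = (DD G).esymm 5
      - (((edges G).card : ℂ) * (DD G).esymm 3 - (A G 2 : ℂ) * (DD G).esymm 2
          + (((A G 3 : ℂ) + 2 * (B G : ℂ)) - (B G : ℂ)) * (DD G).esymm 1
          - ((A G 4 : ℂ) + 3 * (Csum G : ℂ)) + 2 * (Csum G : ℂ))
      + ((phi2 G : ℂ) * (DD G).esymm 1
          - ((((edges G).card : ℂ) + 1) * (A G 2 : ℂ) - ((A G 3 : ℂ) + 2 * (B G : ℂ)))) := by
  rw [esymm_roots_eq 5]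
  have hf : (matchings G).filter (fun M => 2 * M.card ≤ 5)
      = (matchings G).filter (fun M => M.card ≤ 2) :=
    Finset.filter_congr (fun M _ => by omega)
  rw [hf]
  have hsplit : ∑ M ∈ (matchings G).filter (fun M => M.card ≤ 2),
      (-1) ^ M.card * (restD G M).esymm (5 - 2 * M.card)
    = (-1) ^ (∅ : Finset (Sym2 V)).card
        * (restD G ∅).esymm (5 - 2 * (∅ : Finset (Sym2 V)).card)
      + ∑ e ∈ edges G, (-1) ^ ({e} : Finset (Sym2 V)).card
        * (restD G {e}).esymm (5 - 2 * ({e} : Finset (Sym2 V)).card)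
      + ∑ M ∈ (matchings G).filter (fun M => M.card = 2),
        (-1) ^ M.card * (restD G M).esymm (5 - 2 * M.card) :=
    sum_matchings_le_two _
  rw [hsplit]
  have h2M : ∑ M ∈ (matchings G).filter (fun M => M.card = 2),
      (-1 : ℂ) ^ M.card * (restD G M).esymm (5 - 2 * M.card)
    = (phi2 G : ℂ) * (DD G).esymm 1
        - ((((edges G).card : ℂ) + 1) * (A G 2 : ℂ) - ((A G 3 : ℂ) + 2 * (B G : ℂ))) := by
    have hcong : ∀ M ∈ (matchings G).filter (fun M => M.card = 2),
        (-1 : ℂ) ^ M.card * (restD G M).esymm (5 - 2 * M.card)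
          = (DD G).esymm 1 - ∑ g ∈ M, Wf G g := by
      intro M hM
      obtain ⟨hM', hc⟩ := Finset.mem_filter.1 hM
      rw [hc]
      norm_num
      exact esymm1_restD hM'
    rw [Finset.sum_congr rfl hcong, Finset.sum_sub_distrib, Finset.sum_const, nsmul_eq_mul,
      sum_2M_W_val, phi2]
  rw [h2M]
  simp only [Finset.card_empty, Finset.card_singleton, restD_empty, pow_zero, pow_one, one_mul,
    mul_zero, Nat.sub_zero, neg_one_mul]
  norm_num
  have hS : ∑ e ∈ edges G, (restD G {e}).esymm 3
      = ((edges G).card : ℂ) * (DD G).esymm 3 - (A G 2 : ℂ) * (DD G).esymm 2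
        + (((A G 3 : ℂ) + 2 * (B G : ℂ)) - (B G : ℂ)) * (DD G).esymm 1
        - ((A G 4 : ℂ) + 3 * (Csum G : ℂ)) + 2 * (Csum G : ℂ) := by
    rw [Finset.sum_congr rfl hper3]
    simp only [Finset.sum_sub_distrib, Finset.sum_add_distrib]
    rw [Finset.sum_const, nsmul_eq_mul, ← Finset.sum_mul, sum_Wf, ← Finset.sum_mul]
    have hsub : ∑ e ∈ edges G, ((Wf G e) ^ 2 - Qf G e)
        = (A G 3 : ℂ) + 2 * (B G : ℂ) - (B G : ℂ) := by
      rw [Finset.sum_sub_distrib, sum_Wf_sq, ← B_cast]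
    rw [hsub, sum_Wf_cube]
    have h2WQ : ∑ e ∈ edges G, 2 * Wf G e * Qf G e = 2 * (Csum G : ℂ) := by
      rw [C_cast, Finset.mul_sum]
      exact Finset.sum_congr rfl fun e _ => by ring
    rw [h2WQ]
  rw [hS]
  ring

end FinalAux

/-- `p_5(G) = A_5 + 5 A_4 + 5 A_3 - 5 A_2 + 5 C + 10 B`. -/
theorem p5_identity [Fintype V] (G : SimpleGraph V) :
    psum G 5 = (A G 5 : ℂ) + 5 * (A G 4 : ℂ) + 5 * (A G 3 : ℂ) - 5 * (A G 2 : ℂ)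
      + 5 * (Csum G : ℂ) + 10 * (B G : ℂ) := by
  have h0 : psum G 5 = (((LM ℂ G).roots).map (· ^ 5)).sum := rfl
  rw [h0, newton5, esymm_roots_one, esymm_roots_two, esymm_roots_three, esymm_roots_four,
    esymm_roots_five]
  have hA5 : (A G 5 : ℂ) = (DD G).esymm 1 ^ 5 - 5 * (DD G).esymm 1 ^ 3 * (DD G).esymm 2
      + 5 * (DD G).esymm 1 * (DD G).esymm 2 ^ 2 + 5 * (DD G).esymm 1 ^ 2 * (DD G).esymm 3
      - 5 * (DD G).esymm 2 * (DD G).esymm 3 - 5 * (DD G).esymm 1 * (DD G).esymm 4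
      + 5 * (DD G).esymm 5 := by
    have hn := newton5 (DD G)
    have hmap : ((DD G).map (· ^ 5)).sum = (A G 5 : ℂ) := by
      rw [A_cast, DD, Multiset.map_map]
      rfl
    rw [hmap] at hn
    exact hn
  linear_combination -hA5

end LMRIV
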